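/- Let S and T be disjoint transit clusters in a DAG G. If the set of strict external parents of the receivers of S equals that of the receivers of T, and the set of strict external children of the emitters of S equals that of the emitters of T, then S ∪ T is a transit cluster in G. (Union of transit clusters.) -/

import Mathlib

variable {α : Type*}

/-- All edges lie within the vertex set `V`. -/
def EdgesIn (V : Set α) (E : α → α → Prop) : Prop :=
  ∀ u v, E u v → u ∈ V ∧ v ∈ V

/-- The edge relation has no directed cycles. -/
def Acyclic (E : α → α → Prop) : Prop :=
  ∀ v, ¬ Relation.TransGen E v v

/-- A finite directed acyclic graph on vertex set `V`. -/
def IsDAG (V : Set α) (E : α → α → Prop) : Prop :=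
  V.Finite ∧ EdgesIn V E ∧ Acyclic E

/-- Receivers of `T`: members of `T` with a parent outside `T`. -/
def recs (E : α → α → Prop) (T : Set α) : Set α :=
  {v | v ∈ T ∧ ∃ u, u ∉ T ∧ E u v}

/-- Emitters of `T`: members of `T` with a child outside `T`. -/
def emis (E : α → α → Prop) (T : Set α) : Set α :=
  {v | v ∈ T ∧ ∃ u, u ∉ T ∧ E v u}

/-- Edges of `G[T^=]`: the subgraph induced by `T` with incoming edges of
receivers and outgoing edges of emitters removed. -/
def CutEdge (E : α → α → Prop) (T : Set α) (u v : α) : Prop :=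
  u ∈ T ∧ v ∈ T ∧ E u v ∧ v ∉ recs E T ∧ u ∉ emis E T

/-- Undirected reachability with respect to an edge relation. -/
def UndirReach (E : α → α → Prop) (u v : α) : Prop :=
  Relation.ReflTransGen (fun a b => E a b ∨ E b a) u v

/-- `T` is a transit cluster in the graph `(V, E)`. -/
def IsTransitCluster (V : Set α) (E : α → α → Prop) (T : Set α) : Prop :=
  T.Nonempty ∧ T ⊂ V ∧
  (∀ r₁ ∈ recs E T, ∀ r₂ ∈ recs E T,
    {u | u ∉ T ∧ E u r₁} = {u | u ∉ T ∧ E u r₂}) ∧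
  (∀ e₁ ∈ emis E T, ∀ e₂ ∈ emis E T,
    {u | u ∉ T ∧ E e₁ u} = {u | u ∉ T ∧ E e₂ u}) ∧
  (∀ x ∈ T, ∃ w, (w ∈ recs E T ∨ w ∈ emis E T) ∧ UndirReach (CutEdge E T) x w) ∧
  ((emis E T).Nonempty → ∀ r ∈ recs E T, ∃ e ∈ emis E T, Relation.ReflTransGen E r e) ∧
  ((recs E T).Nonempty → ∀ e ∈ emis E T, ∃ r ∈ recs E T, Relation.ReflTransGen E r e)

/-- Vertex set of the graph obtained by clustering `T` into the new vertex `t`. -/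
def ClusterVerts (V T : Set α) (t : α) : Set α := (V \ T) ∪ {t}

/-- Edge relation of the graph obtained by clustering `T` into the new vertex `t`:
edges not touching `T` are kept, the parents of `t` are the external parents of
`recs T`, and the children of `t` are the external children of `emis T`. -/
def ClusterEdge (E : α → α → Prop) (T : Set α) (t : α) (u v : α) : Prop :=
  (u ∉ T ∧ v ∉ T ∧ E u v) ∨
  (u ∉ T ∧ u ≠ t ∧ v = t ∧ ∃ r ∈ recs E T, E u r) ∨
  (u = t ∧ v ∉ T ∧ v ≠ t ∧ ∃ e ∈ emis E T, E e v)

/-- A transit component: a transit cluster that is connected (undirectedly)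
in the subgraph it induces. -/
def IsTransitComponent (V : Set α) (E : α → α → Prop) (T : Set α) : Prop :=
  IsTransitCluster V E T ∧
  ∀ u ∈ T, ∀ v ∈ T, UndirReach (fun a b => a ∈ T ∧ b ∈ T ∧ E a b) u v

/-- Strict parents of a set `A`: parents of members of `A` lying outside `A`. -/
def StrictPa (E : α → α → Prop) (A : Set α) : Set α :=
  {u | u ∉ A ∧ ∃ a ∈ A, E u a}

/-- Strict children of a set `A`: children of members of `A` lying outside `A`. -/
def StrictCh (E : α → α → Prop) (A : Set α) : Set α :=
  {u | u ∉ A ∧ ∃ a ∈ A, E a u}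

/-- Core lemma: a receiver of `S` all of whose external parents lie in the
disjoint transit cluster `T` forces a directed cycle. -/
lemma tc_core
    (E : α → α → Prop) (S T : Set α)
    (hacyc : Acyclic E)
    (hdisj : ∀ a, a ∈ S → a ∈ T → False)
    (hSrec : ∀ r₁ ∈ recs E S, ∀ r₂ ∈ recs E S,
        {u | u ∉ S ∧ E u r₁} = {u | u ∉ S ∧ E u r₂})
    (hSemi : ∀ e₁ ∈ emis E S, ∀ e₂ ∈ emis E S,
        {u | u ∉ S ∧ E e₁ u} = {u | u ∉ S ∧ E e₂ u})
    (hTemi : ∀ e₁ ∈ emis E T, ∀ e₂ ∈ emis E T,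
        {u | u ∉ T ∧ E e₁ u} = {u | u ∉ T ∧ E e₂ u})
    (hS6 : (emis E S).Nonempty → ∀ r ∈ recs E S, ∃ e ∈ emis E S, Relation.ReflTransGen E r e)
    (hT6 : (emis E T).Nonempty → ∀ r ∈ recs E T, ∃ e ∈ emis E T, Relation.ReflTransGen E r e)
    (hpa : StrictPa E (recs E S) = StrictPa E (recs E T))
    (w : α) (hw : w ∈ recs E S)
    (hall : ∀ u, u ∉ S → E u w → u ∈ T) : False := by
  obtain ⟨hwS, u, huS, huw⟩ := hw
  have hw : w ∈ recs E S := ⟨hwS, u, huS, huw⟩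
  have hwT : w ∉ T := fun h => hdisj w hwS h
  have huT : u ∈ T := hall u huS huw
  have hue : u ∈ emis E T := ⟨huT, w, hwT, huw⟩
  have h1 : u ∈ StrictPa E (recs E S) := ⟨fun h => huS h.1, w, hw, huw⟩
  rw [hpa] at h1
  obtain ⟨-, r₀, hr₀, hur₀⟩ := h1
  obtain ⟨hr₀T, p, hpT, hpr₀⟩ := hr₀
  have hr₀ : r₀ ∈ recs E T := ⟨hr₀T, p, hpT, hpr₀⟩
  have h2 : p ∈ StrictPa E (recs E T) := ⟨fun h => hpT h.1, r₀, hr₀, hpr₀⟩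
  rw [← hpa] at h2
  obtain ⟨hpns, w', hw', hpw'⟩ := h2
  have hpS : p ∈ S := by
    by_contra hpS
    have hps : p ∈ {x | x ∉ S ∧ E x w'} := ⟨hpS, hpw'⟩
    rw [hSrec w' hw' w hw] at hps
    exact hpT (hall p hps.1 hps.2)
  have hr₀S : r₀ ∉ S := fun h => hdisj r₀ h hr₀T
  have hpe : p ∈ emis E S := ⟨hpS, r₀, hr₀S, hpr₀⟩
  obtain ⟨g, hg, hwg⟩ := hS6 ⟨p, hpe⟩ w hw
  have hgr₀ : E g r₀ := by
    have : r₀ ∈ {x | x ∉ S ∧ E p x} := ⟨hr₀S, hpr₀⟩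
    rw [hSemi p hpe g hg] at this
    exact this.2
  obtain ⟨f, hf, hrf⟩ := hT6 ⟨u, hue⟩ r₀ hr₀
  have hfw : E f w := by
    have : w ∈ {x | x ∉ T ∧ E u x} := ⟨hwT, huw⟩
    rw [hTemi u hue f hf] at this
    exact this.2
  exact hacyc w ((Relation.TransGen.tail' hwg hgr₀).trans (Relation.TransGen.tail' hrf hfw))

/-- Transfer of emitter-nonemptiness across equal strict-children sets. -/
lemma tc_ne_transfer (E : α → α → Prop) (A B : Set α)
    (h : StrictCh E (emis E A) = StrictCh E (emis E B)) :
    (emis E A).Nonempty → (emis E B).Nonempty := by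
  rintro ⟨e, heA⟩
  obtain ⟨heA1, c, hc, hEc⟩ := heA
  have hmem : c ∈ StrictCh E (emis E A) := ⟨fun h' => hc h'.1, e, ⟨heA1, c, hc, hEc⟩, hEc⟩
  rw [h] at hmem
  obtain ⟨-, a, ha, -⟩ := hmem
  exact ⟨a, ha⟩

/-- Transfer of an external parent of a receiver of `A` to a receiver of `B`. -/
lemma tc_pa_transfer (E : α → α → Prop) (A B : Set α)
    (hpa : StrictPa E (recs E A) = StrictPa E (recs E B))
    (hB3 : ∀ r₁ ∈ recs E B, ∀ r₂ ∈ recs E B,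
        {u | u ∉ B ∧ E u r₁} = {u | u ∉ B ∧ E u r₂}) :
    ∀ r₁ ∈ recs E A, ∀ r₂ ∈ recs E B, ∀ u, u ∉ A → u ∉ B → E u r₁ → E u r₂ := by
  intro r₁ hr₁ r₂ hr₂ u huA huB hE
  have h1 : u ∈ StrictPa E (recs E A) := ⟨fun h => huA h.1, r₁, hr₁, hE⟩
  rw [hpa] at h1
  obtain ⟨-, r', hr', hE'⟩ := h1
  have h2 : u ∈ {x | x ∉ B ∧ E x r'} := ⟨huB, hE'⟩
  rw [hB3 r' hr' r₂ hr₂] at h2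
  exact h2.2

/-- union of transit clusters. -/
theorem transit_cluster_union
    (V : Set α) (E : α → α → Prop) (S T : Set α)
    (hdag : IsDAG V E)
    (hS : IsTransitCluster V E S)
    (hT : IsTransitCluster V E T)
    (hdisj : Disjoint S T)
    (hpa : StrictPa E (recs E S) = StrictPa E (recs E T))
    (hch : StrictCh E (emis E S) = StrictCh E (emis E T)) :
    IsTransitCluster V E (S ∪ T) := by
  obtain ⟨hVfin, hVE, hacyc⟩ := hdag
  obtain ⟨hSne, hSsub, hS3, hS4, hS5, hS6, hS7⟩ := hS
  obtain ⟨hTne, hTsub, hT3, hT4, hT5, hT6, hT7⟩ := hT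
  have hdisj' : ∀ a, a ∈ S → a ∈ T → False :=
    fun a ha hb => Set.disjoint_left.mp hdisj ha hb
  have hdisjT : ∀ a, a ∈ T → a ∈ S → False := fun a ha hb => hdisj' a hb ha
  -- the flipped edge relation
  set F : α → α → Prop := fun a b => E b a with hF
  have hswapRTG : ∀ {a b : α}, Relation.ReflTransGen E a b → Relation.ReflTransGen F b a := by
    intro a b h
    induction h with
    | refl => exact Relation.ReflTransGen.refl
    | tail _ e ih => exact Relation.ReflTransGen.head e ih
  have hswapTG : ∀ {a b : α}, Relation.TransGen F a b → Relation.TransGen E b a := by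
    intro a b h
    induction h with
    | single e => exact Relation.TransGen.single e
    | tail _ e ih => exact Relation.TransGen.head e ih
  have hacycF : Acyclic F := fun v hv => hacyc v (hswapTG hv)
  have hS6F : (emis F S).Nonempty → ∀ r ∈ recs F S,
      ∃ e ∈ emis F S, Relation.ReflTransGen F r e := by
    intro hne r hr
    obtain ⟨r', h1, h2⟩ := hS7 hne r hr
    exact ⟨r', h1, hswapRTG h2⟩
  have hT6F : (emis F T).Nonempty → ∀ r ∈ recs F T,
      ∃ e ∈ emis F T, Relation.ReflTransGen F r e := by
    intro hne r hr
    obtain ⟨r', h1, h2⟩ := hT7 hne r hr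
    exact ⟨r', h1, hswapRTG h2⟩
  -- receivers and emitters of the union
  have hrecsU : recs E (S ∪ T) = recs E S ∪ recs E T := by
    ext v
    constructor
    · rintro ⟨hv | hv, u, hu, hE⟩
      · exact Or.inl ⟨hv, u, fun h => hu (Or.inl h), hE⟩
      · exact Or.inr ⟨hv, u, fun h => hu (Or.inr h), hE⟩
    · rintro (hv | hv)
      · by_contra hn
        refine tc_core E S T hacyc hdisj' hS3 hS4 hT4 hS6 hT6 hpa v hv ?_
        intro u huS hE
        by_contra huT
        exact hn ⟨Or.inl hv.1, u, fun h => h.elim huS huT, hE⟩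
      · by_contra hn
        refine tc_core E T S hacyc hdisjT hT3 hT4 hS4 hT6 hS6 hpa.symm v hv ?_
        intro u huT hE
        by_contra huS
        exact hn ⟨Or.inr hv.1, u, fun h => h.elim huS huT, hE⟩
  have hemisU : emis E (S ∪ T) = emis E S ∪ emis E T := by
    ext v
    constructor
    · rintro ⟨hv | hv, u, hu, hE⟩
      · exact Or.inl ⟨hv, u, fun h => hu (Or.inl h), hE⟩
      · exact Or.inr ⟨hv, u, fun h => hu (Or.inr h), hE⟩
    · rintro (hv | hv)
      · by_contra hn
        refine tc_core F S T hacycF hdisj' hS4 hS3 hT3 hS6F hT6F hch v hv ?_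
        intro u huS hE
        by_contra huT
        exact hn ⟨Or.inl hv.1, u, fun h => h.elim huS huT, hE⟩
      · by_contra hn
        refine tc_core F T S hacycF hdisjT hT4 hT3 hS3 hT6F hS6F hch.symm v hv ?_
        intro u huT hE
        by_contra huS
        exact hn ⟨Or.inr hv.1, u, fun h => h.elim huS huT, hE⟩
  -- nonemptiness transfers
  have hneES : (emis E T).Nonempty → (emis E S).Nonempty := tc_ne_transfer E T S hch.symm
  have hneET : (emis E S).Nonempty → (emis E T).Nonempty := tc_ne_transfer E S T hch
  have hneRS : (recs E T).Nonempty → (recs E S).Nonempty := tc_ne_transfer F T S hpa.symm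
  have hneRT : (recs E S).Nonempty → (recs E T).Nonempty := tc_ne_transfer F S T hpa
  -- parent/child transfer between receivers/emitters of S and T
  have keyP : ∀ x, x ∈ recs E S ∪ recs E T → ∀ y, y ∈ recs E S ∪ recs E T →
      ∀ u, u ∉ S ∪ T → E u x → E u y := by
    rintro x (hx | hx) y (hy | hy) u hu hE <;>
      have huS : u ∉ S := fun h => hu (Or.inl h) <;>
      have huT : u ∉ T := fun h => hu (Or.inr h)
    · have h2 : u ∈ {z | z ∉ S ∧ E z x} := ⟨huS, hE⟩
      rw [hS3 x hx y hy] at h2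
      exact h2.2
    · exact tc_pa_transfer E S T hpa hT3 x hx y hy u huS huT hE
    · exact tc_pa_transfer E T S hpa.symm hS3 x hx y hy u huT huS hE
    · have h2 : u ∈ {z | z ∉ T ∧ E z x} := ⟨huT, hE⟩
      rw [hT3 x hx y hy] at h2
      exact h2.2
  have keyC : ∀ x, x ∈ emis E S ∪ emis E T → ∀ y, y ∈ emis E S ∪ emis E T →
      ∀ u, u ∉ S ∪ T → E x u → E y u := by
    rintro x (hx | hx) y (hy | hy) u hu hE <;>
      have huS : u ∉ S := fun h => hu (Or.inl h) <;>
      have huT : u ∉ T := fun h => hu (Or.inr h)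
    · have h2 : u ∈ {z | z ∉ S ∧ E x z} := ⟨huS, hE⟩
      rw [hS4 x hx y hy] at h2
      exact h2.2
    · exact tc_pa_transfer F S T hch hT4 x hx y hy u huS huT hE
    · exact tc_pa_transfer F T S hch.symm hS4 x hx y hy u huT huS hE
    · have h2 : u ∈ {z | z ∉ T ∧ E x z} := ⟨huT, hE⟩
      rw [hT4 x hx y hy] at h2
      exact h2.2
  -- cut edges lift from S (and T) to the union
  have hcutS : ∀ a b, CutEdge E S a b → CutEdge E (S ∪ T) a b := by
    rintro a b ⟨ha, hb, hE, hbr, hae⟩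
    refine ⟨Or.inl ha, Or.inl hb, hE, ?_, ?_⟩
    · intro h
      rw [hrecsU] at h
      rcases h with h | h
      · exact hbr h
      · exact hdisj' b hb h.1
    · intro h
      rw [hemisU] at h
      rcases h with h | h
      · exact hae h
      · exact hdisj' a ha h.1
  have hcutT : ∀ a b, CutEdge E T a b → CutEdge E (S ∪ T) a b := by
    rintro a b ⟨ha, hb, hE, hbr, hae⟩
    refine ⟨Or.inr ha, Or.inr hb, hE, ?_, ?_⟩
    · intro h
      rw [hrecsU] at h
      rcases h with h | h
      · exact hdisj' b h.1 hb
      · exact hbr h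
    · intro h
      rw [hemisU] at h
      rcases h with h | h
      · exact hdisj' a h.1 ha
      · exact hae h
  refine ⟨hSne.mono Set.subset_union_left, ?_, ?_, ?_, ?_, ?_, ?_⟩
  · -- S ∪ T ⊂ V
    have hsub : S ∪ T ⊆ V := Set.union_subset hSsub.1 hTsub.1
    rw [Set.ssubset_iff_of_subset hsub]
    obtain ⟨s, hs⟩ := hSne
    obtain ⟨w, hw, -⟩ := hS5 s hs
    rcases hw with hw | hw
    · have hwU : w ∈ recs E (S ∪ T) := by rw [hrecsU]; exact Or.inl hw
      obtain ⟨-, u, hu, hE⟩ := hwU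
      exact ⟨u, (hVE u w hE).1, hu⟩
    · have hwU : w ∈ emis E (S ∪ T) := by rw [hemisU]; exact Or.inl hw
      obtain ⟨-, u, hu, hE⟩ := hwU
      exact ⟨u, (hVE w u hE).2, hu⟩
  · -- receivers share external parents
    intro r₁ hr₁ r₂ hr₂
    rw [hrecsU] at hr₁ hr₂
    ext u
    constructor
    · rintro ⟨hu, hE⟩
      exact ⟨hu, keyP r₁ hr₁ r₂ hr₂ u hu hE⟩
    · rintro ⟨hu, hE⟩
      exact ⟨hu, keyP r₂ hr₂ r₁ hr₁ u hu hE⟩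
  · -- emitters share external children
    intro e₁ he₁ e₂ he₂
    rw [hemisU] at he₁ he₂
    ext u
    constructor
    · rintro ⟨hu, hE⟩
      exact ⟨hu, keyC e₁ he₁ e₂ he₂ u hu hE⟩
    · rintro ⟨hu, hE⟩
      exact ⟨hu, keyC e₂ he₂ e₁ he₁ u hu hE⟩
  · -- connectivity
    intro x hx
    rcases hx with hx | hx
    · obtain ⟨w, hw, hreach⟩ := hS5 x hx
      refine ⟨w, ?_, ?_⟩
      · rcases hw with hw | hw
        · exact Or.inl (by rw [hrecsU]; exact Or.inl hw)
        · exact Or.inr (by rw [hemisU]; exact Or.inl hw)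
      · exact Relation.ReflTransGen.mono
          (r := fun a b => CutEdge E S a b ∨ CutEdge E S b a)
          (p := fun a b => CutEdge E (S ∪ T) a b ∨ CutEdge E (S ∪ T) b a)
          (fun a b h => Or.imp (hcutS a b) (hcutS b a) h) x w hreach
    · obtain ⟨w, hw, hreach⟩ := hT5 x hx
      refine ⟨w, ?_, ?_⟩
      · rcases hw with hw | hw
        · exact Or.inl (by rw [hrecsU]; exact Or.inr hw)
        · exact Or.inr (by rw [hemisU]; exact Or.inr hw)
      · exact Relation.ReflTransGen.mono
          (r := fun a b => CutEdge E T a b ∨ CutEdge E T b a)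
          (p := fun a b => CutEdge E (S ∪ T) a b ∨ CutEdge E (S ∪ T) b a)
          (fun a b h => Or.imp (hcutT a b) (hcutT b a) h) x w hreach
  · -- receivers have emitter descendants
    intro hne r hr
    rw [hemisU] at hne
    rw [hrecsU] at hr
    have hES : (emis E S).Nonempty := by
      rcases hne with ⟨e, he | he⟩
      · exact ⟨e, he⟩
      · exact hneES ⟨e, he⟩
    have hET : (emis E T).Nonempty := hneET hES
    rcases hr with hr | hr
    · obtain ⟨e, he, hp⟩ := hS6 hES r hr
      exact ⟨e, by rw [hemisU]; exact Or.inl he, hp⟩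
    · obtain ⟨e, he, hp⟩ := hT6 hET r hr
      exact ⟨e, by rw [hemisU]; exact Or.inr he, hp⟩
  · -- emitters have receiver ancestors
    intro hne e he
    rw [hrecsU] at hne
    rw [hemisU] at he
    have hRS : (recs E S).Nonempty := by
      rcases hne with ⟨r, hr | hr⟩
      · exact ⟨r, hr⟩
      · exact hneRS ⟨r, hr⟩
    have hRT : (recs E T).Nonempty := hneRT hRS
    rcases he with he | he
    · obtain ⟨r, hr, hp⟩ := hS7 hRS e he
      exact ⟨r, by rw [hrecsU]; exact Or.inl hr, hp⟩
    · obtain ⟨r, hr, hp⟩ := hT7 hRT e he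
      exact ⟨r, by rw [hrecsU]; exact Or.inr hr, hp⟩
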